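/- For all λ-term nodes ⟨t₁, p₁⟩ and ⟨t₂, p₂⟩: ⟨t₁, p₁⟩ is bisimilar to ⟨t₂, p₂⟩ if and only if globalize_naive(t₁)[p₁] = globalize_naive(t₂)[p₂]. -/
import Mathlib


namespace HashAlpha

/-- g-terms: λ-terms with de Bruijn indices, extended with global variables `gvar t`. -/
inductive GTerm : Type
  | var : ℕ → GTerm
  | app : GTerm → GTerm → GTerm
  | lam : GTerm → GTerm
  | gvar : GTerm → GTerm
  deriving DecidableEq

/-- A g-term is a pure λ-term if it contains no global variables. -/
def GTerm.IsPure : GTerm → Prop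
  | .var _ => True
  | .app a b => a.IsPure ∧ b.IsPure
  | .lam a => a.IsPure
  | .gvar _ => False

/-- Directions for term positions: ↓, ↙, ↘. -/
inductive Dir : Type
  | down | left | right
  deriving DecidableEq

/-- A term position is a word over {↓, ↙, ↘}. -/
abbrev Pos := List Dir

/-- `|p|_λ`: the number of ↓'s in a position. -/
def lamDepth (p : Pos) : ℕ := p.count Dir.down

/-- Term indexing `t[p]` (partial; does not descend into global variables). -/
def GTerm.index : GTerm → Pos → Option GTerm
  | t, [] => some t
  | .app a _, .left :: p => a.index p
  | .app _ b, .right :: p => b.index p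
  | .lam a, .down :: p => a.index p
  | _, _ => none

/-- `valid(t)`: the set of positions where `t[p]` is defined. -/
def Valid (t : GTerm) : Set Pos := {p | (t.index p).isSome}

/-- `vars(t)`: positions of variables. -/
def Vars (t : GTerm) : Set Pos := {p | ∃ i, t.index p = some (.var i)}

/-- `free(t)`: positions of free variables. -/
def Free (t : GTerm) : Set Pos :=
  {p | ∃ i, t.index p = some (.var i) ∧ lamDepth p ≤ i}

/-- A term is closed if it has no free variables. -/
def Closed (t : GTerm) : Prop := Free t = ∅

/-- `p` is locally closed in `t`: every free variable of `t[p]` is also free in `t`. -/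
def LocallyClosed (t : GTerm) (p : Pos) : Prop :=
  p ∈ Valid t ∧ ∀ u, t.index p = some u → ∀ q ∈ Free u, p ++ q ∈ Free t

/-- Subtract `d0` from every free variable (`d` is the current binder depth). -/
def declift (d0 : ℕ) : GTerm → ℕ → GTerm
  | .var j, d => if d ≤ j then .var (j - d0) else .var j
  | .app a b, d => .app (declift d0 a d) (declift d0 b d)
  | .lam a, d => .lam (declift d0 a (d + 1))
  | .gvar a, _ => .gvar a

/-- The lift `⟨t⟩p`: equal to `t[p]` except every free variable of `t[p]` is
decremented by `|p|_λ`. -/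
def liftAt (t : GTerm) (p : Pos) : Option GTerm :=
  (t.index p).map (fun u => declift (lamDepth p) u 0)

/-- Transition labels: ↓, ↙, ↘ and ↑. -/
inductive Lab : Type
  | down | left | right | up
  deriving DecidableEq

def Lab.ofDir : Dir → Lab
  | .down => .down
  | .left => .left
  | .right => .right

/-- Transitions between term nodes. -/
inductive Trans : GTerm × Pos → Lab → GTerm × Pos → Prop
  | dir (t : GTerm) (p : Pos) (x : Dir) :
      (p ++ [x]) ∈ Valid t → Trans (t, p) (Lab.ofDir x) (t, p ++ [x])
  | up (t : GTerm) (q r : Pos) :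
      t.index (q ++ Dir.down :: r) = some (.var (lamDepth r)) →
      Trans (t, q ++ Dir.down :: r) Lab.up (t, q)

/-- `R` is a bisimulation. -/
def IsBisim (R : GTerm × Pos → GTerm × Pos → Prop) : Prop :=
  ∀ n₁ n₂, R n₁ n₂ → ∀ x : Lab,
    (∀ n₁', Trans n₁ x n₁' → ∃ n₂', Trans n₂ x n₂' ∧ R n₁' n₂') ∧
    (∀ n₂', Trans n₂ x n₂' → ∃ n₁', Trans n₁ x n₁' ∧ R n₁' n₂')

/-- Two nodes are bisimilar when some bisimulation relates them. -/
def Bisim (n₁ n₂ : GTerm × Pos) : Prop := ∃ R, IsBisim R ∧ R n₁ n₂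

/-- `(t, p)` is a term node: `t` is closed and `p ∈ valid(t)`. -/
def IsNode (t : GTerm) (p : Pos) : Prop := Closed t ∧ p ∈ Valid t

/-- A single fork between term nodes (let-abs rule or closed rule). -/
def SingleFork (n₁ n₂ : GTerm × Pos) : Prop :=
  (∃ t p q₁ q₂ r u,
      n₁ = (t, p ++ q₁ ++ r) ∧ n₂ = (t, p ++ q₂ ++ r) ∧
      IsNode t (p ++ q₁ ++ r) ∧ IsNode t (p ++ q₂ ++ r) ∧
      t.index p = some u ∧ LocallyClosed u q₁ ∧ liftAt u q₁ = liftAt u q₂) ∨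
  (∃ t₁ t₂ p₁ p₂ r u,
      n₁ = (t₁, p₁ ++ r) ∧ n₂ = (t₂, p₂ ++ r) ∧
      IsNode t₁ (p₁ ++ r) ∧ IsNode t₂ (p₂ ++ r) ∧
      t₁.index p₁ = some u ∧ Closed u ∧ t₂.index p₂ = some u)

/-- Fork equivalence: the transitive closure of single forks. -/
def ForkEquiv : GTerm × Pos → GTerm × Pos → Prop := Relation.TransGen SingleFork

/-- Shift free variables ≥ `c` up by `d`. -/
def shiftAux (c d : ℕ) : GTerm → GTerm
  | .var j => if j < c then .var j else .var (j + d)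
  | .app a b => .app (shiftAux c d a) (shiftAux c d b)
  | .lam a => .lam (shiftAux (c + 1) d a)
  | .gvar a => .gvar a

/-- Capture-avoiding substitution of free variable `i` by `u` (at current depth `d`). -/
def substAux (i : ℕ) (u : GTerm) : ℕ → GTerm → GTerm
  | d, .var j => if j = i + d then shiftAux 0 d u else .var j
  | d, .app a b => .app (substAux i u d a) (substAux i u d b)
  | d, .lam a => .lam (substAux i u (d + 1) a)
  | _, .gvar a => .gvar a

/-- `t[i := u]`: capture-avoiding substitution of variable `i` by `u` in `t`. -/
def subst (i : ℕ) (u : GTerm) (t : GTerm) : GTerm := substAux i u 0 t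

/-- Simultaneous capture-avoiding substitution of variable `i` by `σᵢ`
(at current depth `d`). -/
def msubstAux (σ : List GTerm) : ℕ → GTerm → GTerm
  | d, .var j =>
      if j < d then .var j else shiftAux 0 d (σ.getD (j - d) (.var (j - d)))
  | d, .app a b => .app (msubstAux σ d a) (msubstAux σ d b)
  | d, .lam a => .lam (msubstAux σ (d + 1) a)
  | _, .gvar a => .gvar a

/-- `tσ`: simultaneous substitution of each variable `i` by the `i`-th element of `σ`. -/
def msubst (σ : List GTerm) (t : GTerm) : GTerm := msubstAux σ 0 t

/-- Term size (the term summary `|t|`); global variables count as leaves. -/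
def gsize : GTerm → ℕ
  | .var _ => 1
  | .gvar _ => 1
  | .app a b => gsize a + gsize b + 1
  | .lam a => gsize a + 1

theorem gsize_shiftAux (c d : ℕ) (t : GTerm) : gsize (shiftAux c d t) = gsize t := by
  induction t generalizing c with
  | var j => simp only [shiftAux]; split <;> rfl
  | app a b iha ihb => simp [shiftAux, gsize, iha, ihb]
  | lam a ih => simp [shiftAux, gsize, ih]
  | gvar a => rfl

theorem gsize_substAux_gvar (i : ℕ) (w : GTerm) (d : ℕ) (t : GTerm) :
    gsize (substAux i (.gvar w) d t) = gsize t := by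
  induction t generalizing d with
  | var j => simp only [substAux]; split <;> rfl
  | app a b iha ihb => simp [substAux, gsize, iha, ihb]
  | lam a ih => simp [substAux, gsize, ih]
  | gvar a => rfl

theorem gsize_msubstAux (σ : List GTerm) (h : ∀ u ∈ σ, ∃ w, u = .gvar w)
    (d : ℕ) (t : GTerm) : gsize (msubstAux σ d t) = gsize t := by
  induction t generalizing d with
  | var j =>
    simp only [msubstAux]
    split
    · rfl
    · rw [gsize_shiftAux]
      rcases Nat.lt_or_ge (j - d) σ.length with hl | hl
      · rw [List.getD_eq_getElem _ _ hl]
        obtain ⟨w, hw⟩ := h _ (List.getElem_mem hl)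
        rw [hw]; rfl
      · rw [List.getD_eq_default _ _ hl]; rfl
  | app a b iha ihb => simp [msubstAux, gsize, iha, ihb]
  | lam a ih => simp [msubstAux, gsize, ih]
  | gvar a => rfl

theorem gsize_msubst (σ : List GTerm) (h : ∀ u ∈ σ, ∃ w, u = .gvar w)
    (t : GTerm) : gsize (msubst σ t) = gsize t :=
  gsize_msubstAux σ h 0 t

/-- The naive globalization procedure. -/
def globalizeNaive : GTerm → GTerm
  | .lam t => .lam (globalizeNaive (subst 0 (.gvar (.lam t)) t))
  | .app t u => .app (globalizeNaive t) (globalizeNaive u)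
  | .gvar t => .gvar t
  | .var i => .var i
termination_by t => gsize t
decreasing_by
  · simp only [subst, gsize_substAux_gvar, gsize]; omega
  · simp only [gsize]; omega
  · simp only [gsize]; omega

/-- The strongly connected component of a closed g-term: positions all of whose
nonempty prefixes index open terms. -/
def SCC (t : GTerm) : Set Pos :=
  {p | p ∈ Valid t ∧ ∀ p' u, p' ≠ [] → p' <+: p → t.index p' = some u → ¬ Closed u}

/-- `duplicates(t)`: strict subterms in the SCC of `t` whose term summary (size)
is not unique within the SCC. -/
def duplicates (t : GTerm) : Set GTerm :=
  {u | ∃ p q v, p ∈ SCC t ∧ q ∈ SCC t ∧ p ≠ [] ∧ q ≠ [] ∧ p ≠ q ∧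
      t.index p = some u ∧ t.index q = some v ∧ gsize u = gsize v}

open Classical in
mutual
/-- Efficient globalization. -/
noncomputable def globalize (r : GTerm) : GTerm :=
  globalizeScc r [] (by simp) r
termination_by (gsize r, 2)
decreasing_by
  apply Prod.Lex.right; omega

noncomputable def globalizeScc (r : GTerm) (σ : List GTerm)
    (h : ∀ u ∈ σ, ∃ w, u = GTerm.gvar w) : GTerm → GTerm
  | .lam t => .lam (globalizeStep r (.gvar (.app r t) :: σ)
      (by
        intro u hu
        rcases List.mem_cons.mp hu with h' | h'
        · exact ⟨_, h'⟩
        · exact h u h') t)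
  | .app t u => .app (globalizeStep r σ h t) (globalizeStep r σ h u)
  | .gvar t => .gvar t
  | .var i => msubst σ (.var i)
termination_by t => (gsize t, 1)
decreasing_by
  · apply Prod.Lex.left; simp only [gsize]; omega
  · apply Prod.Lex.left; simp only [gsize]; omega
  · apply Prod.Lex.left; simp only [gsize]; omega

noncomputable def globalizeStep (r : GTerm) (σ : List GTerm)
    (h : ∀ u ∈ σ, ∃ w, u = GTerm.gvar w) (t : GTerm) : GTerm :=
  if Closed t ∨ t ∈ duplicates r then globalize (msubst σ t)
  else globalizeScc r σ h t
termination_by (gsize t, 3)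
decreasing_by
  · rw [gsize_msubst σ h]; apply Prod.Lex.right; omega
  · apply Prod.Lex.right; omega
end

section AuxLemmas
open GTerm

open GTerm

@[simp] theorem lamDepth_nil : lamDepth ([] : Pos) = 0 := rfl
@[simp] theorem lamDepth_cons (x : Dir) (p : Pos) :
    lamDepth (x :: p) = (if x = Dir.down then 1 else 0) + lamDepth p := by
  cases x <;> simp [lamDepth, List.count_cons] <;> omega
@[simp] theorem lamDepth_append (p q : Pos) :
    lamDepth (p ++ q) = lamDepth p + lamDepth q := by
  simp [lamDepth, List.count_append]

theorem index_append (p q : Pos) : ∀ t : GTerm,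
    t.index (p ++ q) = (t.index p).bind (fun u => u.index q) := by
  induction p with
  | nil => intro t; simp [GTerm.index]
  | cons x p ih => intro t; cases t <;> cases x <;> simp [GTerm.index, ih]

theorem isSome_of_prefix {t : GTerm} {p q : Pos} (h : p <+: q)
    (hq : (t.index q).isSome) : (t.index p).isSome := by
  obtain ⟨z, rfl⟩ := h
  rw [index_append] at hq
  cases hp : t.index p with
  | none => rw [hp] at hq; simp at hq
  | some u => simp

theorem index_singleton_gsize {t u : GTerm} {x : Dir} (h : t.index [x] = some u) :
    gsize u < gsize t := by
  cases t <;> cases x <;> simp [GTerm.index] at h <;> (subst h; simp [gsize]) <;> omega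

theorem index_gsize_le {z : Pos} : ∀ {t u : GTerm}, t.index z = some u → gsize u ≤ gsize t := by
  induction z with
  | nil => intro t u h; simp [GTerm.index] at h; subst h; rfl
  | cons x z ih =>
    intro t u h
    have h2 : t.index ([x] ++ z) = some u := by simpa using h
    rw [index_append] at h2
    cases hp : t.index [x] with
    | none => rw [hp] at h2; simp at h2
    | some w =>
      rw [hp] at h2; simp at h2
      exact le_of_lt (lt_of_le_of_lt (ih h2) (index_singleton_gsize hp))

theorem index_gsize_lt {z : Pos} (hz : z ≠ []) {t u : GTerm} (h : t.index z = some u) :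
    gsize u < gsize t := by
  cases z with
  | nil => exact absurd rfl hz
  | cons x z =>
    have h2 : t.index ([x] ++ z) = some u := by simpa using h
    rw [index_append] at h2
    cases hp : t.index [x] with
    | none => rw [hp] at h2; simp at h2
    | some w =>
      rw [hp] at h2; simp at h2
      exact lt_of_le_of_lt (index_gsize_le h2) (index_singleton_gsize hp)

theorem pure_index {p : Pos} : ∀ {t v : GTerm}, t.IsPure → t.index p = some v → v.IsPure := by
  induction p with
  | nil => intro t v ht h; simp [GTerm.index] at h; subst h; exact ht
  | cons x p ih =>
    intro t v ht h
    cases t <;> cases x <;> simp [GTerm.index] at h <;> simp [GTerm.IsPure] at ht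
    · exact ih ht.1 h
    · exact ih ht.2 h
    · exact ih ht h

theorem closed_var {t : GTerm} {p : Pos} {j : ℕ} (hc : Closed t)
    (h : t.index p = some (.var j)) : j < lamDepth p := by
  by_contra hj
  exact Set.eq_empty_iff_forall_notMem.mp hc p ⟨j, h, by omega⟩

theorem binder_exists {j : ℕ} : ∀ {p : Pos}, j < lamDepth p →
    ∃ q r, p = q ++ Dir.down :: r ∧ lamDepth r = j := by
  intro p
  induction p with
  | nil => simp
  | cons x p ih =>
    intro h
    by_cases hj : j < lamDepth p
    · obtain ⟨q, r, rfl, hr⟩ := ih hj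
      exact ⟨x :: q, r, rfl, hr⟩
    · have hx : x = Dir.down := by
        by_contra hx; simp [hx] at h; omega
      subst hx
      simp at h
      have : j = lamDepth p := by omega
      exact ⟨[], p, rfl, this.symm⟩


open GTerm

/-- `u` is `v` with some free variables (relative to depth `d`) replaced by gvars. -/
inductive ResR : ℕ → GTerm → GTerm → Prop
  | var (d j) : ResR d (.var j) (.var j)
  | subst (d j w) : d ≤ j → ResR d (.var j) (.gvar w)
  | gvar (d w) : ResR d (.gvar w) (.gvar w)
  | app {d a b A B} : ResR d a A → ResR d b B → ResR d (.app a b) (.app A B)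
  | lam {d a A} : ResR (d+1) a A → ResR d (.lam a) (.lam A)

theorem ResR.refl : ∀ (d : ℕ) (t : GTerm), ResR d t t := by
  intro d t
  induction t generalizing d with
  | var j => exact ResR.var d j
  | app a b iha ihb => exact ResR.app (iha d) (ihb d)
  | lam a ih => exact ResR.lam (ih (d+1))
  | gvar w => exact ResR.gvar d w

theorem ResR.trans : ∀ {d : ℕ} {a b c : GTerm}, ResR d a b → ResR d b c → ResR d a c := by
  intro d a b c h1 h2
  induction h1 generalizing c with
  | var d j => exact h2
  | subst d j w hdj => cases h2 with
    | gvar => exact ResR.subst d j _ hdj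
  | gvar d w => exact h2
  | app ha hb iha ihb => cases h2 with
    | app hA hB => exact ResR.app (iha hA) (ihb hB)
  | lam ha ih => cases h2 with
    | lam hA => exact ResR.lam (ih hA)

@[simp] theorem shiftAux_gvar (c d : ℕ) (w : GTerm) : shiftAux c d (.gvar w) = .gvar w := rfl

theorem ResR.substAux {d d' : ℕ} (h : d ≤ d') (w : GTerm) :
    ∀ v : GTerm, ResR d v (substAux 0 (.gvar w) d' v) := by
  intro v
  induction v generalizing d d' with
  | var j =>
    simp only [HashAlpha.substAux]
    by_cases hj : j = 0 + d'
    · simp only [hj, if_pos rfl]; exact ResR.subst d _ w (by omega)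
    · rw [if_neg hj]; exact ResR.var d j
  | app a b iha ihb => exact ResR.app (iha h) (ihb h)
  | lam a ih => exact ResR.lam (ih (by omega))
  | gvar a => exact ResR.gvar d a

theorem gsize_resR : ∀ {d : ℕ} {a b : GTerm}, ResR d a b → gsize a = gsize b := by
  intro d a b h
  induction h with
  | var => rfl
  | subst => rfl
  | gvar => rfl
  | app _ _ iha ihb => simp [gsize, iha, ihb]
  | lam _ ih => simp [gsize, ih]

/-- Index commutes with substitution by a global variable. -/
theorem index_substAux_gvar (p : Pos) : ∀ (s : GTerm) (i : ℕ) (w : GTerm) (d : ℕ),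
    (substAux i (.gvar w) d s).index p
      = (s.index p).map (substAux i (.gvar w) (d + lamDepth p)) := by
  induction p with
  | nil => intro s i w d; simp [GTerm.index]
  | cons x p ih =>
    intro s i w d
    cases s with
    | var j =>
      simp only [HashAlpha.substAux]
      by_cases hj : j = i + d
      · simp only [hj, if_pos rfl]
        cases x <;> simp [GTerm.index]
      · rw [if_neg hj]
        cases x <;> simp [GTerm.index]
    | gvar a => cases x <;> simp [GTerm.index, HashAlpha.substAux]
    | app a b =>
      cases x <;> simp [GTerm.index, HashAlpha.substAux, ih]
    | lam a =>
      cases x <;> simp [GTerm.index, HashAlpha.substAux, ih, Nat.add_assoc]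

/-- The resolution function: index that substitutes the binder (as a global
variable) when descending under a λ. -/
def res : GTerm → Pos → Option GTerm
  | t, [] => some t
  | .app a _, .left :: p => res a p
  | .app _ b, .right :: p => res b p
  | .lam s, .down :: p => res (subst 0 (.gvar (.lam s)) s) p
  | _, _ => none

@[simp] theorem res_nil (t : GTerm) : res t [] = some t := by cases t <;> rfl

theorem res_append (p q : Pos) : ∀ t : GTerm,
    res t (p ++ q) = (res t p).bind (fun u => res u q) := by
  induction p with
  | nil => intro t; simp
  | cons x p ih => intro t; cases t <;> cases x <;> simp [res, ih]

theorem res_isSome (p : Pos) : ∀ t : GTerm, (res t p).isSome = (t.index p).isSome := by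
  induction p with
  | nil => intro t; simp [GTerm.index]
  | cons x p ih =>
    intro t
    cases t <;> cases x <;> simp [res, GTerm.index, ih]
    rw [subst, index_substAux_gvar]
    simp

/-- Main correspondence between `res` and `index`. -/
theorem res_index (p : Pos) : ∀ (t u : GTerm), res t p = some u →
    ∀ (r : Pos) (v : GTerm), t.index (p ++ r) = some v →
    ∃ v', u.index r = some v' ∧ ResR (lamDepth r) v v' := by
  induction p with
  | nil =>
    intro t u hu r v hv
    simp at hu; subst hu
    exact ⟨v, hv, ResR.refl _ _⟩
  | cons x p ih =>
    intro t u hu r v hv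
    cases t <;> cases x <;> simp [res] at hu <;> simp [GTerm.index] at hv
    · exact ih _ _ hu r v hv
    · exact ih _ _ hu r v hv
    · -- lam case
      rename_i s
      have hidx : (subst 0 (.gvar (.lam s)) s).index (p ++ r)
          = some (substAux 0 (.gvar (.lam s)) (0 + lamDepth (p ++ r)) v) := by
        rw [subst, index_substAux_gvar, hv]; rfl
      obtain ⟨v', hv', hR⟩ := ih _ _ hu r _ hidx
      refine ⟨v', hv', ResR.trans ?_ hR⟩
      exact ResR.substAux (by rw [lamDepth_append]; omega) _ v

theorem res_head {t u v : GTerm} {p : Pos} (hu : res t p = some u)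
    (hv : t.index p = some v) : ResR 0 v u := by
  obtain ⟨v', hv', hR⟩ := res_index p t u hu [] v (by simpa using hv)
  simp [GTerm.index] at hv'
  subst hv'
  simpa using hR

/-- A position holding a global variable resolves to that global variable. -/
theorem res_gvar (p : Pos) : ∀ (t w : GTerm), t.index p = some (.gvar w) →
    res t p = some (.gvar w) := by
  induction p with
  | nil => intro t w h; simp [GTerm.index] at h; simp [h]
  | cons x p ih =>
    intro t w h
    cases t <;> cases x <;> simp [GTerm.index] at h <;> simp [res]
    · exact ih _ _ h
    · exact ih _ _ h
    · rename_i s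
      apply ih
      rw [subst, index_substAux_gvar, h]
      rfl

/-- A free variable (relative to the position) is left untouched by resolution. -/
theorem res_var_free (r : Pos) : ∀ (u : GTerm) (j : ℕ), u.index r = some (.var j) →
    lamDepth r ≤ j → res u r = some (.var j) := by
  induction r with
  | nil => intro u j h _; simp [GTerm.index] at h; simp [h]
  | cons x r ih =>
    intro u j h hj
    cases u <;> cases x <;> simp [GTerm.index] at h <;> simp [res]
    · exact ih _ _ h (by simp at hj; omega)
    · exact ih _ _ h (by simp at hj; omega)
    · rename_i s
      apply ih
      · rw [subst, index_substAux_gvar, h]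
        simp only [Option.map_some]
        simp only [HashAlpha.substAux]
        rw [if_neg (by simp at hj; omega)]
      · simp at hj; omega

/-- ResR preserves variables bound strictly inside. -/
theorem resR_index_var (r : Pos) : ∀ {d : ℕ} {a b : GTerm} {j : ℕ}, ResR d a b →
    a.index r = some (.var j) → j < d + lamDepth r → b.index r = some (.var j) := by
  induction r with
  | nil =>
    intro d a b j hR h hj
    simp [GTerm.index] at h; subst h
    cases hR with
    | var => rfl
    | subst _ _ _ hd => simp at hj; omega
  | cons x r ih =>
    intro d a b j hR h hj
    cases a <;> cases x <;> simp [GTerm.index] at h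
    · cases hR with
      | app hA hB => exact ih hA h (by simpa using hj)
    · cases hR with
      | app hA hB => exact ih hB h (by simpa using hj)
    · cases hR with
      | lam hA =>
        simp [GTerm.index]
        exact ih hA h (by simp at hj ⊢; omega)

/-- Resolution of a variable bound at binder position `q`. -/
theorem res_var_bound {t s : GTerm} {q r : Pos} (hq : res t q = some (.lam s))
    (hv : t.index (q ++ Dir.down :: r) = some (.var (lamDepth r))) :
    res t (q ++ Dir.down :: r) = some (.gvar (.lam s)) := by
  have hsplit := index_append q (Dir.down :: r) t
  rw [hv] at hsplit
  cases hq0 : t.index q with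
  | none => rw [hq0] at hsplit; simp at hsplit
  | some v =>
    rw [hq0] at hsplit; simp at hsplit
    have hR := res_head hq hq0
    cases v <;> simp [GTerm.index] at hsplit
    rename_i s0
    cases hR with
    | lam hR1 =>
      have hs : s.index r = some (.var (lamDepth r)) :=
        resR_index_var r hR1 hsplit.symm (by omega)
      rw [res_append q (Dir.down :: r) t, hq]
      simp [res]
      apply res_gvar
      rw [subst, index_substAux_gvar, hs]
      simp [HashAlpha.substAux]


open GTerm

@[simp] theorem index_nil (t : GTerm) : t.index [] = some t := by cases t <;> rfl

theorem gN_var (i : ℕ) : globalizeNaive (.var i) = .var i := by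
  rw [globalizeNaive]
theorem gN_gvar (w : GTerm) : globalizeNaive (.gvar w) = .gvar w := by
  rw [globalizeNaive]
theorem gN_app (a b : GTerm) :
    globalizeNaive (.app a b) = .app (globalizeNaive a) (globalizeNaive b) := by
  rw [globalizeNaive]
theorem gN_lam (s : GTerm) :
    globalizeNaive (.lam s) = .lam (globalizeNaive (subst 0 (.gvar (.lam s)) s)) := by
  rw [globalizeNaive]

theorem gN_index (p : Pos) : ∀ t : GTerm,
    (globalizeNaive t).index p = (res t p).map globalizeNaive := by
  induction p with
  | nil => intro t; simp [GTerm.index]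
  | cons x p ih =>
    intro t
    cases t with
    | var i => rw [gN_var]; cases x <;> simp [GTerm.index, res]
    | gvar w => rw [gN_gvar]; cases x <;> simp [GTerm.index, res]
    | app a b => rw [gN_app]; cases x <;> simp [GTerm.index, res, ih]
    | lam s => rw [gN_lam]; cases x <;> simp [GTerm.index, res, ih]

theorem gN_eq_gvar {u w : GTerm} (h : globalizeNaive u = .gvar w) : u = .gvar w := by
  cases u with
  | var i => rw [gN_var] at h; cases h
  | app a b => rw [gN_app] at h; cases h
  | lam s => rw [gN_lam] at h; cases h
  | gvar x => rw [gN_gvar] at h; exact h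

theorem gN_eq_app {u A B : GTerm} (h : globalizeNaive u = .app A B) :
    ∃ a b, u = .app a b := by
  cases u with
  | var i => rw [gN_var] at h; cases h
  | app a b => exact ⟨a, b, rfl⟩
  | lam s => rw [gN_lam] at h; cases h
  | gvar x => rw [gN_gvar] at h; cases h

theorem gN_eq_lam {u A : GTerm} (h : globalizeNaive u = .lam A) :
    ∃ s, u = .lam s := by
  cases u with
  | var i => rw [gN_var] at h; cases h
  | app a b => rw [gN_app] at h; cases h
  | lam s => exact ⟨s, rfl⟩
  | gvar x => rw [gN_gvar] at h; cases h

/-- Head equality of g-terms. -/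
def headEq : GTerm → GTerm → Prop
  | .var i, .var j => i = j
  | .app _ _, .app _ _ => True
  | .lam _, .lam _ => True
  | .gvar w, .gvar x => w = x
  | _, _ => False

/-- Extensionality: terms agreeing in shape and head labels are equal. -/
theorem gterm_ext : ∀ (a b : GTerm),
    (∀ r : Pos, (a.index r).isSome ↔ (b.index r).isSome) →
    (∀ (r : Pos) (x y : GTerm), a.index r = some x → b.index r = some y → headEq x y) →
    a = b := by
  intro a
  induction a with
  | var i =>
    intro b _ hh
    have := hh [] (.var i) b (index_nil _) (index_nil _)
    cases b <;> simp [headEq] at this <;> simp [this]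
  | gvar w =>
    intro b _ hh
    have := hh [] (.gvar w) b (index_nil _) (index_nil _)
    cases b <;> simp [headEq] at this <;> simp [this]
  | app a1 a2 ih1 ih2 =>
    intro b hs hh
    have hhead := hh [] (.app a1 a2) b (index_nil _) (index_nil _)
    cases b with
    | var j => simp [headEq] at hhead
    | lam s => simp [headEq] at hhead
    | gvar w => simp [headEq] at hhead
    | app b1 b2 =>
      have e1 : a1 = b1 := by
        apply ih1
        · intro r; have := hs (Dir.left :: r); simpa [GTerm.index] using this
        · intro r x y hx hy
          exact hh (Dir.left :: r) x y (by simpa [GTerm.index] using hx)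
            (by simpa [GTerm.index] using hy)
      have e2 : a2 = b2 := by
        apply ih2
        · intro r; have := hs (Dir.right :: r); simpa [GTerm.index] using this
        · intro r x y hx hy
          exact hh (Dir.right :: r) x y (by simpa [GTerm.index] using hx)
            (by simpa [GTerm.index] using hy)
      rw [e1, e2]
  | lam a1 ih =>
    intro b hs hh
    have hhead := hh [] (.lam a1) b (index_nil _) (index_nil _)
    cases b with
    | var j => simp [headEq] at hhead
    | app b1 b2 => simp [headEq] at hhead
    | gvar w => simp [headEq] at hhead
    | lam b1 =>
      have e1 : a1 = b1 := by
        apply ih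
        · intro r; have := hs (Dir.down :: r); simpa [GTerm.index] using this
        · intro r x y hx hy
          exact hh (Dir.down :: r) x y (by simpa [GTerm.index] using hx)
            (by simpa [GTerm.index] using hy)
      rw [e1]

/-- Terms with the same shape have the same size. -/
theorem shape_gsize : ∀ (a b : GTerm),
    (∀ r : Pos, (a.index r).isSome ↔ (b.index r).isSome) → gsize a = gsize b := by
  intro a
  induction a with
  | var i =>
    intro b hs
    cases b with
    | var j => rfl
    | gvar w => rfl
    | app b1 b2 => have := (hs [Dir.left]).mpr (by simp [GTerm.index]); simp [GTerm.index] at this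
    | lam b1 => have := (hs [Dir.down]).mpr (by simp [GTerm.index]); simp [GTerm.index] at this
  | gvar w =>
    intro b hs
    cases b with
    | var j => rfl
    | gvar w' => rfl
    | app b1 b2 => have := (hs [Dir.left]).mpr (by simp [GTerm.index]); simp [GTerm.index] at this
    | lam b1 => have := (hs [Dir.down]).mpr (by simp [GTerm.index]); simp [GTerm.index] at this
  | app a1 a2 ih1 ih2 =>
    intro b hs
    cases b with
    | var j => have := (hs [Dir.left]).mp (by simp [GTerm.index]); simp [GTerm.index] at this
    | gvar w => have := (hs [Dir.left]).mp (by simp [GTerm.index]); simp [GTerm.index] at this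
    | lam b1 => have := (hs [Dir.left]).mp (by simp [GTerm.index]); simp [GTerm.index] at this
    | app b1 b2 =>
      have e1 := ih1 b1 (fun r => by have := hs (Dir.left :: r); simpa [GTerm.index] using this)
      have e2 := ih2 b2 (fun r => by have := hs (Dir.right :: r); simpa [GTerm.index] using this)
      simp [gsize, e1, e2]
  | lam a1 ih =>
    intro b hs
    cases b with
    | var j => have := (hs [Dir.down]).mp (by simp [GTerm.index]); simp [GTerm.index] at this
    | gvar w => have := (hs [Dir.down]).mp (by simp [GTerm.index]); simp [GTerm.index] at this
    | app b1 b2 => have := (hs [Dir.down]).mp (by simp [GTerm.index]); simp [GTerm.index] at this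
    | lam b1 =>
      have e1 := ih b1 (fun r => by have := hs (Dir.down :: r); simpa [GTerm.index] using this)
      simp [gsize, e1]


open GTerm

theorem ofDir_ne_up (x : Dir) : Lab.ofDir x ≠ Lab.up := by cases x <;> simp [Lab.ofDir]

theorem ofDir_inj {x y : Dir} (h : Lab.ofDir x = Lab.ofDir y) : x = y := by
  cases x <;> cases y <;> simp [Lab.ofDir] at h <;> rfl

theorem trans_cases {n n' : GTerm × Pos} {l : Lab} (h : Trans n l n') :
    (∃ t p x, n = (t, p) ∧ l = Lab.ofDir x ∧ n' = (t, p ++ [x]) ∧ (t.index (p ++ [x])).isSome)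
    ∨ (∃ t q r, n = (t, q ++ Dir.down :: r) ∧ l = Lab.up ∧
        t.index (q ++ Dir.down :: r) = some (.var (lamDepth r)) ∧ n' = (t, q)) := by
  cases h with
  | dir t p x hx => exact Or.inl ⟨t, p, x, rfl, rfl, rfl, hx⟩
  | up t q r hv => exact Or.inr ⟨t, q, r, rfl, rfl, hv, rfl⟩

theorem trans_ofDir {t : GTerm} {p : Pos} {x : Dir} {n' : GTerm × Pos}
    (h : Trans (t, p) (Lab.ofDir x) n') :
    n' = (t, p ++ [x]) ∧ (t.index (p ++ [x])).isSome := by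
  rcases trans_cases h with ⟨t', p', x', he, hl, hn, hs⟩ | ⟨t', q, r, he, hl, _, _⟩
  · obtain ⟨rfl, rfl⟩ := Prod.mk.injEq .. ▸ (by exact Prod.mk.inj he : t = t' ∧ p = p')
    obtain rfl := ofDir_inj hl
    exact ⟨hn, hs⟩
  · exact absurd hl ((ofDir_ne_up x) : _)

theorem trans_up {t : GTerm} {p : Pos} {n' : GTerm × Pos}
    (h : Trans (t, p) Lab.up n') :
    ∃ q r, p = q ++ Dir.down :: r ∧ t.index p = some (.var (lamDepth r)) ∧ n' = (t, q) := by
  rcases trans_cases h with ⟨t', p', x', he, hl, hn, hs⟩ | ⟨t', q, r, he, hl, hv, hn⟩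
  · exact absurd hl.symm (ofDir_ne_up x')
  · obtain ⟨rfl, rfl⟩ := (by exact Prod.mk.inj he : t = t' ∧ p = q ++ Dir.down :: r)
    exact ⟨q, r, rfl, hv, hn⟩

theorem bisim_symm {n₁ n₂ : GTerm × Pos} (h : Bisim n₁ n₂) : Bisim n₂ n₁ := by
  obtain ⟨R, hR, hn⟩ := h
  exact ⟨fun a b => R b a, fun a b hab x => ⟨(hR b a hab x).2, (hR b a hab x).1⟩, hn⟩

theorem bisim_trans {n₁ n₂ n₃ : GTerm × Pos} (h1 : Bisim n₁ n₂) (h2 : Bisim n₂ n₃) :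
    Bisim n₁ n₃ := by
  obtain ⟨R, hR, hn⟩ := h1
  obtain ⟨S, hS, hm⟩ := h2
  refine ⟨fun a c => ∃ b, R a b ∧ S b c, ?_, n₂, hn, hm⟩
  rintro a c ⟨b, hab, hbc⟩ x
  constructor
  · intro a' ha'
    obtain ⟨b', hb', hRb⟩ := (hR a b hab x).1 a' ha'
    obtain ⟨c', hc', hSc⟩ := (hS b c hbc x).1 b' hb'
    exact ⟨c', hc', b', hRb, hSc⟩
  · intro c' hc'
    obtain ⟨b', hb', hSb⟩ := (hS b c hbc x).2 c' hc'
    obtain ⟨a', ha', hRa⟩ := (hR a b hab x).2 b' hb'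
    exact ⟨a', ha', b', hRa, hSb⟩

theorem bisim_step {n₁ n₂ m₁ : GTerm × Pos} {x : Lab} (h : Bisim n₁ n₂)
    (ht : Trans n₁ x m₁) : ∃ m₂, Trans n₂ x m₂ ∧ Bisim m₁ m₂ := by
  obtain ⟨R, hR, hn⟩ := h
  obtain ⟨m₂, hm₂, hRm⟩ := (hR n₁ n₂ hn x).1 m₁ ht
  exact ⟨m₂, hm₂, R, hR, hRm⟩

theorem bisim_descend (r : Pos) : ∀ (t₁ : GTerm) (p₁ : Pos) (t₂ : GTerm) (p₂ : Pos),
    Bisim (t₁, p₁) (t₂, p₂) → (t₂.index p₂).isSome → (t₁.index (p₁ ++ r)).isSome →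
    (t₂.index (p₂ ++ r)).isSome ∧ Bisim (t₁, p₁ ++ r) (t₂, p₂ ++ r) := by
  induction r with
  | nil => intro t₁ p₁ t₂ p₂ hb h2 _; simpa using ⟨h2, hb⟩
  | cons x r ih =>
    intro t₁ p₁ t₂ p₂ hb h2 h1
    have hx1 : (t₁.index (p₁ ++ [x])).isSome := by
      apply isSome_of_prefix _ h1
      exact ⟨r, by simp⟩
    have tr1 : Trans (t₁, p₁) (Lab.ofDir x) (t₁, p₁ ++ [x]) := Trans.dir t₁ p₁ x hx1
    obtain ⟨m₂, tr2, hb'⟩ := bisim_step hb tr1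
    obtain ⟨rfl, hx2⟩ := trans_ofDir tr2
    have h1' : (t₁.index ((p₁ ++ [x]) ++ r)).isSome := by simpa using h1
    have := ih t₁ (p₁ ++ [x]) t₂ (p₂ ++ [x]) hb' hx2 h1'
    simpa using this

theorem bisim_prefix_absurd {t : GTerm} {x z : Pos} (hz : z ≠ [])
    (hv : (t.index (x ++ z)).isSome) (hb : Bisim (t, x) (t, x ++ z)) : False := by
  have hvx : (t.index x).isSome := isSome_of_prefix ⟨z, rfl⟩ hv
  have hshape : ∀ r : Pos, (t.index (x ++ r)).isSome ↔ (t.index ((x ++ z) ++ r)).isSome := by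
    intro r
    constructor
    · intro h; exact (bisim_descend r t x t (x ++ z) hb hv h).1
    · intro h; exact (bisim_descend r t (x ++ z) t x (bisim_symm hb) hvx h).1
  obtain ⟨u, hu⟩ := Option.isSome_iff_exists.mp hvx
  obtain ⟨u', hu'⟩ := Option.isSome_iff_exists.mp hv
  have huz : u.index z = some u' := by
    have := index_append x z t
    rw [hu, hu'] at this
    simpa using this.symm
  have hlt : gsize u' < gsize u := index_gsize_lt hz huz
  have heq : gsize u = gsize u' := by
    apply shape_gsize
    intro r
    have h1 := hshape r
    rw [index_append x r t, index_append (x ++ z) r t, hu, hu'] at h1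
    simpa using h1
  omega


open GTerm

theorem split_external {β p r ρ : Pos} (hd : β ++ Dir.down :: ρ = p ++ r)
    (hlen : β.length < p.length) : ∃ z, p = β ++ Dir.down :: z ∧ ρ = z ++ r := by
  have h1 : β ++ [Dir.down] <+: p ++ r := ⟨ρ, by simpa using hd⟩
  have h2 : p <+: p ++ r := ⟨r, rfl⟩
  have h3 : β ++ [Dir.down] <+: p :=
    List.prefix_of_prefix_length_le h1 h2 (by simp; omega)
  obtain ⟨z, hz⟩ := h3
  refine ⟨z, by simpa using hz.symm, ?_⟩
  rw [← hz] at hd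
  have h4 : β ++ (Dir.down :: ρ) = β ++ (Dir.down :: (z ++ r)) := by
    simpa [List.append_assoc] using hd
  have h5 := List.append_cancel_left h4
  simpa using h5

theorem res_sub_isSome {t u : GTerm} {p : Pos} (hu : res t p = some u) (r : Pos) :
    (u.index r).isSome = (t.index (p ++ r)).isSome := by
  rw [← res_isSome r u, ← res_isSome (p ++ r) t, res_append, hu]
  rfl

theorem side_internal {t₁ t₂ : GTerm} {p₁ p₂ r β₁ ρ₁ β₂ ρ₂ : Pos}
    (hb : Bisim (t₁, p₁) (t₂, p₂)) (hv2 : (t₂.index p₂).isSome)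
    (hv1r : (t₁.index (p₁ ++ r)).isSome) (hv2r : (t₂.index (p₂ ++ r)).isSome)
    (hd1 : β₁ ++ Dir.down :: ρ₁ = p₁ ++ r) (hd2 : β₂ ++ Dir.down :: ρ₂ = p₂ ++ r)
    (hbB : Bisim (t₁, β₁) (t₂, β₂))
    (hlen : p₁.length ≤ β₁.length) :
    ∃ c, β₁ = p₁ ++ c ∧ β₂ = p₂ ++ c ∧ ρ₂ = ρ₁ := by
  have h1 : p₁ <+: (p₁ ++ r) := ⟨r, rfl⟩
  have h2 : β₁ <+: (p₁ ++ r) := ⟨Dir.down :: ρ₁, hd1⟩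
  have h3 : p₁ <+: β₁ := List.prefix_of_prefix_length_le h1 h2 hlen
  obtain ⟨c, rfl⟩ := h3
  have hr : r = c ++ Dir.down :: ρ₁ := by
    rw [List.append_assoc] at hd1
    exact (List.append_cancel_left hd1).symm
  have hcr : c <+: r := by rw [hr]; exact ⟨Dir.down :: ρ₁, rfl⟩
  have hvc1 : (t₁.index (p₁ ++ c)).isSome := by
    refine isSome_of_prefix ?_ hv1r
    obtain ⟨z, hz⟩ := hcr
    exact ⟨z, by rw [List.append_assoc, hz]⟩
  obtain ⟨hvc2, hbc⟩ := bisim_descend c t₁ p₁ t₂ p₂ hb hv2 hvc1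
  have hbb : Bisim (t₂, p₂ ++ c) (t₂, β₂) := bisim_trans (bisim_symm hbc) hbB
  have k1 : (p₂ ++ c) <+: (p₂ ++ r) := by
    obtain ⟨z, hz⟩ := hcr
    exact ⟨z, by rw [List.append_assoc, hz]⟩
  have k2 : β₂ <+: (p₂ ++ r) := ⟨Dir.down :: ρ₂, hd2⟩
  have hβ₂ : β₂ = p₂ ++ c := by
    rcases le_or_gt β₂.length (p₂ ++ c).length with hle | hlt
    · have hpp : β₂ <+: (p₂ ++ c) := List.prefix_of_prefix_length_le k2 k1 hle
      obtain ⟨z, hz⟩ := hpp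
      by_cases hz0 : z = []
      · rw [hz0] at hz; simpa using hz
      · exfalso
        have hbig : Bisim (t₂, β₂) (t₂, β₂ ++ z) := by
          have := bisim_symm hbb
          rw [← hz] at this
          exact this
        exact bisim_prefix_absurd hz0 (by rw [hz]; exact hvc2) hbig
    · have hpp : (p₂ ++ c) <+: β₂ := List.prefix_of_prefix_length_le k1 k2 (le_of_lt hlt)
      obtain ⟨z, hz⟩ := hpp
      have hz0 : z ≠ [] := by
        intro h; rw [h] at hz; simp at hz
        rw [hz] at hlt; omega
      exfalso
      have hbig : Bisim (t₂, p₂ ++ c) (t₂, (p₂ ++ c) ++ z) := by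
        rw [← hz] at hbb; exact hbb
      have hvβ₂ : (t₂.index β₂).isSome := isSome_of_prefix k2 hv2r
      exact bisim_prefix_absurd hz0 (by rw [hz]; exact hvβ₂) hbig
  refine ⟨c, rfl, hβ₂, ?_⟩
  rw [hβ₂, hr] at hd2
  rw [List.append_assoc] at hd2
  have := List.append_cancel_left hd2
  have := List.append_cancel_left this
  simpa using this

theorem bisim_res_eq (n : ℕ) : ∀ (t₁ : GTerm) (p₁ : Pos) (t₂ : GTerm) (p₂ : Pos),
    p₁.length + p₂.length ≤ n →
    t₁.IsPure → t₂.IsPure → Closed t₁ → Closed t₂ →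
    (t₁.index p₁).isSome → (t₂.index p₂).isSome →
    Bisim (t₁, p₁) (t₂, p₂) → res t₁ p₁ = res t₂ p₂ := by
  induction n using Nat.strong_induction_on with
  | _ n ih =>
  intro t₁ p₁ t₂ p₂ hlen hp₁ hp₂ hc₁ hc₂ hv₁ hv₂ hb
  obtain ⟨u₁, hu₁⟩ := Option.isSome_iff_exists.mp (by rw [res_isSome]; exact hv₁)
  obtain ⟨u₂, hu₂⟩ := Option.isSome_iff_exists.mp (by rw [res_isSome]; exact hv₂)
  have hsh : ∀ r : Pos, (t₁.index (p₁ ++ r)).isSome ↔ (t₂.index (p₂ ++ r)).isSome := by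
    intro r
    constructor
    · intro h; exact (bisim_descend r t₁ p₁ t₂ p₂ hb hv₂ h).1
    · intro h; exact (bisim_descend r t₂ p₂ t₁ p₁ (bisim_symm hb) hv₁ h).1
  rw [hu₁, hu₂]
  congr 1
  apply gterm_ext
  · intro r
    rw [res_sub_isSome hu₁ r, res_sub_isSome hu₂ r]
    exact hsh r
  · intro r x y hx hy
    have hvx1 : (t₁.index (p₁ ++ r)).isSome := by
      rw [← res_sub_isSome hu₁ r, hx]; rfl
    have hvx2 : (t₂.index (p₂ ++ r)).isSome := by
      rw [← res_sub_isSome hu₂ r, hy]; rfl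
    obtain ⟨v₁, hv1r⟩ := Option.isSome_iff_exists.mp hvx1
    obtain ⟨v₂, hv2r⟩ := Option.isSome_iff_exists.mp hvx2
    obtain ⟨x', hx', hRx⟩ := res_index p₁ t₁ u₁ hu₁ r v₁ hv1r
    rw [hx] at hx'
    injection hx' with hx'
    subst hx'
    obtain ⟨y', hy', hRy⟩ := res_index p₂ t₂ u₂ hu₂ r v₂ hv2r
    rw [hy] at hy'
    injection hy' with hy'
    subst hy'
    have hBr : Bisim (t₁, p₁ ++ r) (t₂, p₂ ++ r) :=
      (bisim_descend r t₁ p₁ t₂ p₂ hb hv₂ hvx1).2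
    cases v₁ with
    | gvar w =>
      have := pure_index hp₁ hv1r
      simp [GTerm.IsPure] at this
    | app a b =>
      have hstep1 : (t₁.index ((p₁ ++ r) ++ [Dir.left])).isSome := by
        rw [index_append, hv1r]; simp [GTerm.index]
      obtain ⟨m₂, tr2, _⟩ := bisim_step hBr (Trans.dir t₁ (p₁ ++ r) Dir.left hstep1)
      have hstep2 := (trans_ofDir (x := Dir.left) tr2).2
      rw [index_append, hv2r] at hstep2
      cases v₂ with
      | var j => simp [GTerm.index] at hstep2
      | lam s => simp [GTerm.index] at hstep2
      | gvar w => simp [GTerm.index] at hstep2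
      | app c d =>
        cases hRx; cases hRy; simp [headEq]
    | lam s =>
      have hstep1 : (t₁.index ((p₁ ++ r) ++ [Dir.down])).isSome := by
        rw [index_append, hv1r]; simp [GTerm.index]
      obtain ⟨m₂, tr2, _⟩ := bisim_step hBr (Trans.dir t₁ (p₁ ++ r) Dir.down hstep1)
      have hstep2 := (trans_ofDir (x := Dir.down) tr2).2
      rw [index_append, hv2r] at hstep2
      cases v₂ with
      | var j => simp [GTerm.index] at hstep2
      | app c d => simp [GTerm.index] at hstep2
      | gvar w => simp [GTerm.index] at hstep2
      | lam s' =>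
        cases hRx; cases hRy; simp [headEq]
    | var j₁ =>
      have hj₁ : j₁ < lamDepth (p₁ ++ r) := closed_var hc₁ hv1r
      obtain ⟨β₁, ρ₁, hdec₁, hρ₁⟩ := binder_exists hj₁
      have tr1 : Trans (t₁, p₁ ++ r) Lab.up (t₁, β₁) := by
        rw [hdec₁]
        exact Trans.up t₁ β₁ ρ₁ (by rw [← hdec₁, hρ₁]; exact hv1r)
      obtain ⟨m₂, tr2, hbB0⟩ := bisim_step hBr tr1
      obtain ⟨β₂, ρ₂, hdec₂, hvar₂, rfl⟩ := trans_up tr2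
      have hv₂var : v₂ = .var (lamDepth ρ₂) := by
        rw [hv2r] at hvar₂; injection hvar₂
      subst hv₂var
      have hbB : Bisim (t₁, β₁) (t₂, β₂) := hbB0
      by_cases hA : p₁.length ≤ β₁.length
      · -- binder inside the common suffix
        obtain ⟨c, hc1, hc2, hρeq⟩ := side_internal hb hv₂ hvx1 hvx2 hdec₁.symm hdec₂.symm hbB hA
        have hr : r = c ++ Dir.down :: ρ₁ := by
          rw [hc1, List.append_assoc] at hdec₁
          exact List.append_cancel_left hdec₁
        have hjlt : j₁ < lamDepth r := by
          rw [hr]; simp; omega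
        cases hRx with
        | subst _ _ _ hle => omega
        | var =>
          cases hRy with
          | subst _ _ _ hle => rw [hρeq] at hle; omega
          | var => simp [headEq, hρeq]; omega
      · push_neg at hA
        by_cases hB : p₂.length ≤ β₂.length
        · exfalso
          obtain ⟨c, hc2, hc1, _⟩ := side_internal (bisim_symm hb) hv₁ hvx2 hvx1
            hdec₂.symm hdec₁.symm (bisim_symm hbB) hB
          rw [hc1] at hA
          simp at hA
        · push_neg at hB
          obtain ⟨z₁, hz₁, hzρ₁⟩ := split_external hdec₁.symm hA
          obtain ⟨z₂, hz₂, hzρ₂⟩ := split_external hdec₂.symm hB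
          have hjge1 : lamDepth r ≤ j₁ := by rw [← hρ₁, hzρ₁]; simp
          have hjge2 : lamDepth r ≤ lamDepth ρ₂ := by rw [hzρ₂]; simp
          -- resolve side 1 binder
          have hvβ₁ : (t₁.index β₁).isSome :=
            isSome_of_prefix ⟨Dir.down :: ρ₁, hdec₁.symm⟩ hvx1
          obtain ⟨vβ₁, hvβ₁e⟩ := Option.isSome_iff_exists.mp hvβ₁
          have hsplit₁ := index_append β₁ (Dir.down :: ρ₁) t₁
          rw [← hdec₁, hv1r, hvβ₁e] at hsplit₁
          simp at hsplit₁
          obtain ⟨w₁, hw₁⟩ := Option.isSome_iff_exists.mp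
            (by rw [res_isSome]; exact hvβ₁ : (res t₁ β₁).isSome)
          have hR₁ := res_head hw₁ hvβ₁e
          cases vβ₁ with
          | var j => simp [GTerm.index] at hsplit₁
          | app a b => simp [GTerm.index] at hsplit₁
          | gvar w => simp [GTerm.index] at hsplit₁
          | lam s₀ =>
            simp [GTerm.index] at hsplit₁
            cases hR₁ with
            | lam hR₁' =>
              rename_i s₁
              have hrb₁ : res t₁ (p₁ ++ r) = some (.gvar (.lam s₁)) := by
                rw [hdec₁]
                exact res_var_bound hw₁ (by rw [← hdec₁, hρ₁]; exact hv1r)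
              have hresu₁ : res u₁ r = some (.gvar (.lam s₁)) := by
                rw [← hrb₁, res_append, hu₁]; rfl
              -- x must be the gvar
              cases hRx with
              | var =>
                have := res_var_free r u₁ j₁ hx hjge1
                rw [this] at hresu₁
                simp at hresu₁
              | subst _ _ w hle =>
                have hxg := res_gvar r u₁ w hx
                rw [hxg] at hresu₁
                injection hresu₁ with hresu₁
                injection hresu₁ with hresu₁
                subst hresu₁
                -- resolve side 2 binder
                have hvβ₂ : (t₂.index β₂).isSome :=
                  isSome_of_prefix ⟨Dir.down :: ρ₂, hdec₂.symm⟩ hvx2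
                obtain ⟨vβ₂, hvβ₂e⟩ := Option.isSome_iff_exists.mp hvβ₂
                have hsplit₂ := index_append β₂ (Dir.down :: ρ₂) t₂
                rw [← hdec₂, hv2r, hvβ₂e] at hsplit₂
                simp at hsplit₂
                obtain ⟨w₂, hw₂⟩ := Option.isSome_iff_exists.mp
                  (by rw [res_isSome]; exact hvβ₂ : (res t₂ β₂).isSome)
                have hR₂ := res_head hw₂ hvβ₂e
                cases vβ₂ with
                | var j => simp [GTerm.index] at hsplit₂
                | app a b => simp [GTerm.index] at hsplit₂
                | gvar w => simp [GTerm.index] at hsplit₂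
                | lam s₀' =>
                  simp [GTerm.index] at hsplit₂
                  cases hR₂ with
                  | lam hR₂' =>
                    rename_i s₂
                    have hrb₂ : res t₂ (p₂ ++ r) = some (.gvar (.lam s₂)) := by
                      rw [hdec₂]
                      exact res_var_bound hw₂ (by rw [← hdec₂]; exact hv2r)
                    have hresu₂ : res u₂ r = some (.gvar (.lam s₂)) := by
                      rw [← hrb₂, res_append, hu₂]; rfl
                    cases hRy with
                    | var =>
                      have := res_var_free r u₂ (lamDepth ρ₂) hy hjge2
                      rw [this] at hresu₂
                      simp at hresu₂
                    | subst _ _ w' hle' =>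
                      have hyg := res_gvar r u₂ w' hy
                      rw [hyg] at hresu₂
                      injection hresu₂ with hresu₂
                      injection hresu₂ with hresu₂
                      subst hresu₂
                      -- apply outer induction hypothesis to the binders
                      have hlt : β₁.length + β₂.length < n := by
                        have e1 : p₁.length = β₁.length + z₁.length + 1 := by
                          rw [hz₁]; simp only [List.length_append, List.length_cons]; omega
                        have e2 : p₂.length = β₂.length + z₂.length + 1 := by
                          rw [hz₂]; simp only [List.length_append, List.length_cons]; omega
                        omega
                      have hIH := ih (β₁.length + β₂.length) hlt t₁ β₁ t₂ β₂
                        le_rfl hp₁ hp₂ hc₁ hc₂ hvβ₁ hvβ₂ hbB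
                      rw [hw₁, hw₂] at hIH
                      have h2 : s₁ = s₂ := by simpa using hIH
                      subst h2
                      simp [headEq]


open GTerm

/-- The candidate bisimulation: equality of naive globalizations at the positions. -/
def RG : GTerm × Pos → GTerm × Pos → Prop := fun n₁ n₂ =>
  n₁.1.IsPure ∧ n₂.1.IsPure ∧ Closed n₁.1 ∧ Closed n₂.1 ∧
  (n₁.1.index n₁.2).isSome ∧ (n₂.1.index n₂.2).isSome ∧
  (globalizeNaive n₁.1).index n₁.2 = (globalizeNaive n₂.1).index n₂.2

theorem RG_symm {a b : GTerm × Pos} (h : RG a b) : RG b a := by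
  obtain ⟨h1, h2, h3, h4, h5, h6, h7⟩ := h
  exact ⟨h2, h1, h4, h3, h6, h5, h7.symm⟩

theorem RG_step {n₁ n₂ m₁ : GTerm × Pos} {l : Lab} (h : RG n₁ n₂) (ht : Trans n₁ l m₁) :
    ∃ m₂, Trans n₂ l m₂ ∧ RG m₁ m₂ := by
  obtain ⟨t₁, p₁⟩ := n₁
  obtain ⟨t₂, p₂⟩ := n₂
  obtain ⟨hp₁, hp₂, hc₁, hc₂, hv₁, hv₂, hG⟩ := h
  dsimp only at hp₁ hp₂ hc₁ hc₂ hv₁ hv₂ hG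
  obtain ⟨u₁, hu₁⟩ := Option.isSome_iff_exists.mp
    (by rw [res_isSome]; exact hv₁ : (res t₁ p₁).isSome)
  obtain ⟨u₂, hu₂⟩ := Option.isSome_iff_exists.mp
    (by rw [res_isSome]; exact hv₂ : (res t₂ p₂).isSome)
  have hGr : globalizeNaive u₁ = globalizeNaive u₂ := by
    rw [gN_index p₁ t₁, gN_index p₂ t₂, hu₁, hu₂] at hG
    simpa using hG
  obtain ⟨v₁, hv₁e⟩ := Option.isSome_iff_exists.mp hv₁
  obtain ⟨v₂, hv₂e⟩ := Option.isSome_iff_exists.mp hv₂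
  have hR₁ : ResR 0 v₁ u₁ := res_head hu₁ hv₁e
  have hR₂ : ResR 0 v₂ u₂ := res_head hu₂ hv₂e
  rcases trans_cases ht with ⟨t', p', x, he, hl, hm, hs⟩ | ⟨t', q, rr, he, hl, hvv, hm⟩
  · obtain ⟨h1, h2⟩ : t₁ = t' ∧ p₁ = p' := ⟨congrArg Prod.fst he, congrArg Prod.snd he⟩
    subst h1; subst h2
    subst hl; subst hm
    have hsx : (v₁.index [x]).isSome := by
      rw [index_append, hv₁e] at hs
      simpa using hs
    cases v₁ with
    | var j => cases x <;> simp [GTerm.index] at hsx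
    | gvar w => cases x <;> simp [GTerm.index] at hsx
    | app a b =>
      obtain ⟨A, B, rfl⟩ : ∃ A B, u₁ = .app A B := by
        cases hR₁; exact ⟨_, _, rfl⟩
      obtain ⟨C, D, rfl⟩ : ∃ C D, u₂ = .app C D := by
        apply gN_eq_app
        rw [← hGr, gN_app]
      obtain ⟨c, d, rfl⟩ : ∃ c d, v₂ = .app c d := by
        cases hR₂; exact ⟨_, _, rfl⟩
      cases x with
      | down => simp [GTerm.index] at hsx
      | left =>
        have hs2 : (t₂.index (p₂ ++ [Dir.left])).isSome := by
          rw [index_append, hv₂e]; simp [GTerm.index]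
        refine ⟨(t₂, p₂ ++ [Dir.left]), Trans.dir t₂ p₂ Dir.left hs2, ?_⟩
        refine ⟨hp₁, hp₂, hc₁, hc₂, hs, hs2, ?_⟩
        rw [index_append p₁ [Dir.left], index_append p₂ [Dir.left], hG]
      | right =>
        have hs2 : (t₂.index (p₂ ++ [Dir.right])).isSome := by
          rw [index_append, hv₂e]; simp [GTerm.index]
        refine ⟨(t₂, p₂ ++ [Dir.right]), Trans.dir t₂ p₂ Dir.right hs2, ?_⟩
        refine ⟨hp₁, hp₂, hc₁, hc₂, hs, hs2, ?_⟩
        rw [index_append p₁ [Dir.right], index_append p₂ [Dir.right], hG]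
    | lam s =>
      obtain ⟨A, rfl⟩ : ∃ A, u₁ = .lam A := by
        cases hR₁; exact ⟨_, rfl⟩
      obtain ⟨C, rfl⟩ : ∃ C, u₂ = .lam C := by
        apply gN_eq_lam
        rw [← hGr, gN_lam]
      obtain ⟨c, rfl⟩ : ∃ c, v₂ = .lam c := by
        cases hR₂; exact ⟨_, rfl⟩
      cases x with
      | left => simp [GTerm.index] at hsx
      | right => simp [GTerm.index] at hsx
      | down =>
        have hs2 : (t₂.index (p₂ ++ [Dir.down])).isSome := by
          rw [index_append, hv₂e]; simp [GTerm.index]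
        refine ⟨(t₂, p₂ ++ [Dir.down]), Trans.dir t₂ p₂ Dir.down hs2, ?_⟩
        refine ⟨hp₁, hp₂, hc₁, hc₂, hs, hs2, ?_⟩
        rw [index_append p₁ [Dir.down], index_append p₂ [Dir.down], hG]
  · obtain ⟨h1, hp⟩ : t₁ = t' ∧ p₁ = q ++ Dir.down :: rr :=
      ⟨congrArg Prod.fst he, congrArg Prod.snd he⟩
    subst h1
    subst hl; subst hm
    -- side 1 var and binder
    have hv₁var : v₁ = .var (lamDepth rr) := by
      rw [hp] at hv₁e
      rw [hv₁e] at hvv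
      exact Option.some_inj.mp hvv
    subst hv₁var
    have hvq₁ : (t₁.index q).isSome := by
      refine isSome_of_prefix ⟨Dir.down :: rr, hp.symm⟩ ?_
      exact hv₁
    obtain ⟨vq₁, hvq₁e⟩ := Option.isSome_iff_exists.mp hvq₁
    have hsplit₁ := index_append q (Dir.down :: rr) t₁
    rw [← hp, hv₁e, hvq₁e] at hsplit₁
    simp at hsplit₁
    obtain ⟨w₁, hw₁⟩ := Option.isSome_iff_exists.mp
      (by rw [res_isSome]; exact hvq₁ : (res t₁ q).isSome)
    have hRq₁ := res_head hw₁ hvq₁e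
    cases vq₁ with
    | var j => simp [GTerm.index] at hsplit₁
    | app a b => simp [GTerm.index] at hsplit₁
    | gvar w => simp [GTerm.index] at hsplit₁
    | lam s₀ =>
      cases hRq₁ with
      | lam hRq₁' =>
        rename_i s₁
        have hrb₁ : res t₁ p₁ = some (.gvar (.lam s₁)) := by
          rw [hp]
          exact res_var_bound hw₁ (by rw [← hp]; exact hv₁e)
        have hu₁g : u₁ = .gvar (.lam s₁) := by
          rw [hu₁] at hrb₁
          exact Option.some_inj.mp hrb₁
        subst hu₁g
        have hu₂g : u₂ = .gvar (.lam s₁) := by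
          apply gN_eq_gvar
          rw [← hGr, gN_gvar]
        subst hu₂g
        -- side 2 must be a bound variable
        cases hR₂ with
        | gvar =>
          have := pure_index hp₂ hv₂e
          simp [GTerm.IsPure] at this
        | subst _ j₂ _ hle =>
          have hj₂ : j₂ < lamDepth p₂ := closed_var hc₂ hv₂e
          obtain ⟨q₂, r₂, hdec₂, hρ₂⟩ := binder_exists hj₂
          have tr₂ : Trans (t₂, p₂) Lab.up (t₂, q₂) := by
            rw [hdec₂]
            exact Trans.up t₂ q₂ r₂ (by rw [← hdec₂, hρ₂]; exact hv₂e)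
          refine ⟨(t₂, q₂), tr₂, ?_⟩
          have hvq₂ : (t₂.index q₂).isSome := by
            refine isSome_of_prefix ⟨Dir.down :: r₂, hdec₂.symm⟩ ?_
            exact hv₂
          obtain ⟨vq₂, hvq₂e⟩ := Option.isSome_iff_exists.mp hvq₂
          have hsplit₂ := index_append q₂ (Dir.down :: r₂) t₂
          rw [← hdec₂, hv₂e, hvq₂e] at hsplit₂
          simp at hsplit₂
          obtain ⟨w₂, hw₂⟩ := Option.isSome_iff_exists.mp
            (by rw [res_isSome]; exact hvq₂ : (res t₂ q₂).isSome)
          have hRq₂ := res_head hw₂ hvq₂e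
          cases vq₂ with
          | var j => simp [GTerm.index] at hsplit₂
          | app a b => simp [GTerm.index] at hsplit₂
          | gvar w => simp [GTerm.index] at hsplit₂
          | lam s₀' =>
            cases hRq₂ with
            | lam hRq₂' =>
              rename_i s₂
              have hrb₂ : res t₂ p₂ = some (.gvar (.lam s₂)) := by
                rw [hdec₂]
                exact res_var_bound hw₂ (by rw [← hdec₂, hρ₂]; exact hv₂e)
              rw [hu₂] at hrb₂
              have hs₂ : s₂ = s₁ := by
                injection hrb₂ with h'
                injection h'.symm with h''
                injection h''.symm with h'''
                exact h'''.symm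
              subst hs₂
              refine ⟨hp₁, hp₂, hc₁, hc₂, hvq₁, hvq₂, ?_⟩
              rw [gN_index, gN_index, hw₁, hw₂]

theorem RG_isBisim : IsBisim RG := by
  intro n₁ n₂ h x
  constructor
  · intro m₁ ht; exact RG_step h ht
  · intro m₂ ht
    obtain ⟨m₁, h1, h2⟩ := RG_step (RG_symm h) ht
    exact ⟨m₁, h1, RG_symm h2⟩


end AuxLemmas

/-- bisimilarity coincides with equality after naive globalization. -/
theorem bisim_iff_globalizeNaive (t₁ t₂ : GTerm) (p₁ p₂ : Pos)
    (h₁ : t₁.IsPure) (h₂ : t₂.IsPure)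
    (n₁ : IsNode t₁ p₁) (n₂ : IsNode t₂ p₂) :
    Bisim (t₁, p₁) (t₂, p₂) ↔
      (globalizeNaive t₁).index p₁ = (globalizeNaive t₂).index p₂ := by
  have hv₁ : (t₁.index p₁).isSome := n₁.2
  have hv₂ : (t₂.index p₂).isSome := n₂.2
  constructor
  · intro hb
    rw [gN_index, gN_index,
      bisim_res_eq (p₁.length + p₂.length) t₁ p₁ t₂ p₂ le_rfl h₁ h₂ n₁.1 n₂.1 hv₁ hv₂ hb]
  · intro hG
    exact ⟨RG, RG_isBisim, h₁, h₂, n₁.1, n₂.1, hv₁, hv₂, hG⟩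


end HashAlpha
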